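/- For every integer N ≥ 2, the two polynomials p₁(N, a, c) and p₂(N, a, c) in ℚ[a, c] form a regular sequence; equivalently, the graded quotient ℚ[a, c]/(p₁(N), p₂(N)) is a finite-dimensional ℚ-vector space (a graded complete intersection with Hilbert series (1−t⁹)(1−t¹⁰)/((1−t)(1−t²))). -/

import Mathlib

set_option maxHeartbeats 2000000
set_option maxRecDepth 100000


open MvPolynomial

noncomputable section

/-- The variable `a`, of weighted degree 1. -/
def a : MvPolynomial (Fin 2) ℚ := X 0

/-- The variable `c`, of weighted degree 2. -/
def c : MvPolynomial (Fin 2) ℚ := X 1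

/-- The grading weights: `deg a = 1`, `deg c = 2`. -/
def w : Fin 2 → ℕ := ![1, 2]

/-- The first relation polynomial `p₁(N, a, c)`. -/
def p1 (N : ℚ) : MvPolynomial (Fin 2) ℚ :=
  C (1620*N - 1296) * a^9
  + C (-19440*N^3 + 46656*N^2 - 35244*N + 8289) * a^7 * c
  + C (40824*N^5 - 163296*N^4 + 246708*N^3 - 174069*N^2 + 56478*N - 6584) * a^5 * c^2
  + C (-19440*N^7 + 108864*N^6 - 246708*N^5 + 290115*N^4 - 188260*N^3 + 65840*N^2
      - 11038*N + 631) * a^3 * c^3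
  + C (1620*N^9 - 11664*N^8 + 35244*N^7 - 58023*N^6 + 56478*N^5 - 32920*N^4
      + 11038*N^3 - 1893*N^2 + 120*N) * a * c^4

/-- The second relation polynomial `p₂(N, a, c)`. -/
def p2 (N : ℚ) : MvPolynomial (Fin 2) ℚ :=
  C 324 * a^10
  + C (-14580*N^2 + 23328*N - 8811) * a^8 * c
  + C (68040*N^4 - 217728*N^3 + 246708*N^2 - 116046*N + 18826) * a^6 * c^2
  + C (-68040*N^6 + 326592*N^5 - 616770*N^4 + 580230*N^3 - 282390*N^2 + 65840*N
      - 5519) * a^4 * c^3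
  + C (14580*N^8 - 93312*N^7 + 246708*N^6 - 348138*N^5 + 282390*N^4 - 131680*N^3
      + 33114*N^2 - 3786*N + 120) * a^2 * c^4
  + C (-324*N^10 + 2592*N^9 - 8811*N^8 + 16578*N^7 - 18826*N^6 + 13168*N^5
      - 5519*N^4 + 1262*N^3 - 120*N^2) * c^5

/-- The degree `i` graded piece of the quotient of `ℚ[a,c]` (weighted grading) by `I`. -/
def piece (I : Ideal (MvPolynomial (Fin 2) ℚ)) (i : ℕ) :
    Submodule ℚ (MvPolynomial (Fin 2) ℚ ⧸ I) :=
  Submodule.map (Ideal.Quotient.mkₐ ℚ I).toLinearMap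
    (weightedHomogeneousSubmodule ℚ w i)

end


noncomputable section Aux

open MvPolynomial RingTheory.Sequence Pointwise

/-- Abbreviation for our polynomial ring. -/
abbrev R2 : Type := MvPolynomial (Fin 2) ℚ

/-- The resultant-type coefficient. -/
def dp (N : ℚ) : ℚ :=
  (40454147287347393600000000)*N
      + (-2959267299815081455200000000)*N^2
      + (104433301865274241748868000000)*N^3
      + (-2370652990254507999549801600000)*N^4
      + (38940316396257654913738834800000)*N^5
      + (-493641334229264876342445988032000)*N^6
      + (5029853656534995840434191606554000)*N^7
      + (-42360469870707440156632346415257760)*N^8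
      + (300919627882339881078222183340215792)*N^9
      + (-1831066240906487342652575074974857664)*N^10
      + (9658908012337755336480137213446329456)*N^11
      + (-44593305011530738055702783148272881824)*N^12
      + (181587228638875866841245282149774863248)*N^13
      + (-656329890102545788861221309918392540928)*N^14
      + (2116632723672561904047735972542510848512)*N^15
      + (-6116874948968868238628799767488106585088)*N^16
      + (15897347088976754702845341191757994097664)*N^17
      + (-37265437684104532255721366282350906970112)*N^18
      + (78979119314101697640860035675434371432448)*N^19
      + (-151625048880592988272900418514009766428672)*N^20
      + (264071191737681598519243262423320247623680)*N^21
      + (-417663747130084849889362506106830728134656)*N^22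
      + (600327194447656081742759221556251415937024)*N^23
      + (-784415100122750528005365957294087389577216)*N^24
      + (931719716132132536446875516056844699959296)*N^25
      + (-1005617179522773557112414943112527824814080)*N^26
      + (985487988451541292474411195231720906424320)*N^27
      + (-875853506674754136353621944726653574840320)*N^28
      + (704816574048010338760268628609289109372928)*N^29
      + (-512484868343797327026047797206154494345216)*N^30
      + (335820919406961205628841687388731488600064)*N^31
      + (-197672781911188588153166150192936628781056)*N^32
      + (104104482352180014022833559478219751555072)*N^33
      + (-48815831648550826688981543181349973655552)*N^34
      + (20259548864979583284424539907225873809408)*N^35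
      + (-7387257951899817366699811630081892155392)*N^36
      + (2345007924828548341333347406219529158656)*N^37
      + (-640596982794884990243372146152248967168)*N^38
      + (148358780018050891683255545579723292672)*N^39
      + (-28556463499803541980132028126863556608)*N^40
      + (4444647124568951987068492901190205440)*N^41
      + (-537379523107954173724832911142682624)*N^42
      + (47346838465183382679162872288772096)*N^43
      + (-2703864574375502950215699413336064)*N^44
      + (75107349288208415283769428148224)*N^45

/-- The `c^5`-coefficient of `p2`. -/
def lam (N : ℚ) : ℚ :=
  -324*N^10 + 2592*N^9 - 8811*N^8 + 16578*N^7 - 18826*N^6 + 13168*N^5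
    - 5519*N^4 + 1262*N^3 - 120*N^2

/-- First cofactor in the Bezout identity. -/
def A1 (N : ℚ) : R2 :=
  C ((-48970168353120514500000)*N
      + (3539583075887651197440000)*N^2
      + (-123325225879553187738885000)*N^3
      + (2761581818322736020802067400)*N^4
      + (-44707849257095121789858583440)*N^5
      + (558073902705236579320296024528)*N^6
      + (-5593914735599713959839896266924)*N^7
      + (46298558228221480471846880567436)*N^8
      + (-322886108219940561914994728386872)*N^9
      + (1926723682544365336508669492582040)*N^10
      + (-9955454165725768324192160697643668)*N^11
      + (44967257346035372996395276269137460)*N^12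
      + (-178918244464419627934550974583551776)*N^13
      + (631035292337390869011534146823135648)*N^14
      + (-1983018870914587987210201218643075728)*N^15
      + (5575887276648081420119071789852443792)*N^16
      + (-14077565944485087225547962949790940192)*N^17
      + (32003829127555768771597759534522946064)*N^18
      + (-65664373477924299928198868376390707400)*N^19
      + (121811786443853847831987761220829062252)*N^20
      + (-204580315128843205282883856169260660420)*N^21
      + (311355004682425928767296647957246728836)*N^22
      + (-429631122077078259669497511129723532068)*N^23
      + (537583930861693218638532270226715656080)*N^24
      + (-609821800227248455595874382466879819520)*N^25
      + (626743727973093398639544992459391207552)*N^26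
      + (-582978050625635944186218785893620567936)*N^27
      + (490051346408332273232342734265189604864)*N^28
      + (-371533733722162301740532694212640841728)*N^29
      + (253410103594761787337051824550671610880)*N^30
      + (-155005134274618782416561657380263478272)*N^31
      + (84697294067787537757938714730290892800)*N^32
      + (-41144404652111937885514234201006424064)*N^33
      + (17664765921427921274545964653574356992)*N^34
      + (-6654178204702819663818629583746629632)*N^35
      + (2179308844593586405296091013542576128)*N^36
      + (-613446388409205933275916064404799488)*N^37
      + (146217220754980673972256495680618496)*N^38
      + (-28932145573957434737951969567047680)*N^39
      + (4624043126379048528069728642531328)*N^40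
      + (-573469770072732804846169620480000)*N^41
      + (51774966093396655355889098686464)*N^42
      + (-3026809695873090930482129928192)*N^43
      + (85988911814576446888696872960)*N^44) * a^8
  + C ((186937785574544379375000)*N
      + (-14263828239654591229800000)*N^2
      + (525699544556511832038648750)*N^3
      + (-12476844981996498800318160750)*N^4
      + (214502093795931367883486852500)*N^5
      + (-2848817652876583376302442113220)*N^6
      + (30438796696270779519863694932398)*N^7
      + (-269045314184254328852979189581030)*N^8
      + (2007522628816287074850918276632560)*N^9
      + (-12840881696008888054086559862880464)*N^10
      + (71256064441237101238608860790940868)*N^11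
      + (-346321141908279285128979114100247884)*N^12
      + (1485651650176117213110551328965650064)*N^13
      + (-5660845869667295772251552160571955272)*N^14
      + (19259266103403280044734748276297829340)*N^15
      + (-58758872292476293506318981302998280764)*N^16
      + (161340821007529411102726977566910089112)*N^17
      + (-399893466795941074796010719080226685612)*N^18
      + (896878359155537448214749505517949925806)*N^19
      + (-1823761097700982836607343365191371368305)*N^20
      + (3367601190210898117801373500112476164939)*N^21
      + (-5653241020518169177918870691783835477555)*N^22
      + (8634714256409452930421277839255167351443)*N^23
      + (-12005277593351231010348634403408694250428)*N^24
      + (15195833446587255880786218030341291156664)*N^25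
      + (-17507074846795786685603370621504247236000)*N^26
      + (18348445186615973829182584264029079047072)*N^27
      + (-17477768965287974185430313736770490020480)*N^28
      + (15111660353057999332437521438927225637120)*N^29
      + (-11839547526320453750447476567311777943296)*N^30
      + (8387067730726330784207872556333625545472)*N^31
      + (-5357510863436193264654459810910128884736)*N^32
      + (3075763568560824708109065087894943328256)*N^33
      + (-1580603557630180071465710296255936217088)*N^34
      + (723492110690462235079679017032815247360)*N^35
      + (-293206079841823076980305032773775917056)*N^36
      + (104430677455071493813465883967824068608)*N^37
      + (-32389608993551890169134148616808562688)*N^38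
      + (8646956873403598483825525331532447744)*N^39
      + (-1957476559486408855643123831380377600)*N^40
      + (368357678052503562021614384364650496)*N^41
      + (-56059909425524764699507392522485760)*N^42
      + (6628358381532180259305380351311872)*N^43
      + (-571187903486017739115253142126592)*N^44
      + (31906859562105899413325853229056)*N^45
      + (-867034227231138571014289489920)*N^46) * a^6*c
  + C ((-59190319271185727625000)*N
      + (4869473049475115187960000)*N^2
      + (-193597645153784645157626250)*N^3
      + (4959047192790004659247862850)*N^4
      + (-92059601665405560020919821510)*N^5
      + (1320887047136460905211344959062)*N^6
      + (-15255422579523319508211953308842)*N^7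
      + (145837379248840359718518190694442)*N^8
      + (-1177674452337684446954091249884298)*N^9
      + (8158009871498048610320572491440010)*N^10
      + (-49064996088006114016550715155265824)*N^11
      + (258679726017039452770648940757675456)*N^12
      + (-1204890866800783858868182544611510404)*N^13
      + (4990205001804106434650098969871770572)*N^14
      + (-18475301620702181384029579545131938668)*N^15
      + (61418953421922413636024908256716920228)*N^16
      + (-184022856850641812849911122969190264892)*N^17
      + (498489754891318405406826755829073965132)*N^18
      + (-1224014086966438550109603486618783584298)*N^19
      + (2730209001964291568322748544007783969216)*N^20
      + (-5541704569774250967551167111169457873774)*N^21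
      + (10250130173046072943057628680212353883585)*N^22
      + (-17294527462222260873324599255735961286125)*N^23
      + (26637846871303451338690371415083294438879)*N^24
      + (-37470294011760608349113774853028804044471)*N^25
      + (48142720451891240083912204574020707456492)*N^26
      + (-56488409250978675165165955244603102867712)*N^27
      + (60502321623668058024924053615019202545408)*N^28
      + (-59105962890334077700768396213183526179872)*N^29
      + (52608392607850930344187319840629946640000)*N^30
      + (-42599493208403306555246755872468986082816)*N^31
      + (31323303369962248563728427641607644200704)*N^32
      + (-20865921517868337543447159723130727575296)*N^33
      + (12556947540311736577667899083730821454848)*N^34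
      + (-6803234074161329961237690711961247772672)*N^35
      + (3304674054504618916389310712164147863552)*N^36
      + (-1431998390028782680344216209574751961088)*N^37
      + (550181986994053007477097919717118312448)*N^38
      + (-186025645090435925828838061067392253952)*N^39
      + (54842393379114554327767921117709205504)*N^40
      + (-13933659864063087957028543565257506816)*N^41
      + (3005300525614657397554137107666042880)*N^42
      + (-539415945744277509561207283242762240)*N^43
      + (78382561784804352065142598712426496)*N^44
      + (-8857579893623563022061161838280704)*N^45
      + (730196035935124649372124337668096)*N^46
      + (-39055930292121397082420177534976)*N^47
      + (1017081518023994715688025456640)*N^48) * a^4*c^2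
  + C ((1294734836480085000000)*N
      + (-132055965004073408550000)*N^2
      + (6325927645693496774940000)*N^3
      + (-191309811457171946631745500)*N^4
      + (4130179578943280257575502200)*N^5
      + (-68127205413074379434685142500)*N^6
      + (896458702311003348834971141658)*N^7
      + (-9694744657267689118229967105598)*N^8
      + (88061353207164062179267734471164)*N^9
      + (-683052698606947186587421221059872)*N^10
      + (4583096240127236975057000039396378)*N^11
      + (-26877814807703521467726007226761402)*N^12
      + (138937153294116402231618144297894272)*N^13
      + (-637457697280630611965121834660619376)*N^14
      + (2611011135836546997174299248843501516)*N^15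
      + (-9594048727769040536472780077936951996)*N^16
      + (31754914931135008099472722908934970320)*N^17
      + (-95003393088441717213179322266037019436)*N^18
      + (257664553895015434918656883828475814700)*N^19
      + (-635071938712123315660049844538735567695)*N^20
      + (1425380802824004114721914683531274858579)*N^21
      + (-2918142943518605943178068711032082817755)*N^22
      + (5456741303148414416713983734597094179967)*N^23
      + (-9329563670693630401015332526775856097017)*N^24
      + (14595365786801350588984853271002907427725)*N^25
      + (-20902519215762967110936006768891124518633)*N^26
      + (27409384059333637527324614329937974619577)*N^27
      + (-32906918673733642923222343180757284980804)*N^28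
      + (36158833388357754473728082926079533436616)*N^29
      + (-36342137427085147518676856034045154858464)*N^30
      + (33379213850606308271136450270821896008672)*N^31
      + (-27981673114458619051619366910769565459328)*N^32
      + (21375401589627502175391326916737077924608)*N^33
      + (-14850485360538870779159812151891139489024)*N^34
      + (9360623596237413361890475186511479666944)*N^35
      + (-5337511257687596862338007985084932731904)*N^36
      + (2743574687272058315521095510541052958720)*N^37
      + (-1265914594479809342051739104129264369664)*N^38
      + (521664911869825736186671226729929605120)*N^39
      + (-190810005084141009031997094572068700160)*N^40
      + (61483857827497462894743939730745327616)*N^41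
      + (-17291128815377872357208355909025136640)*N^42
      + (4194642006162633228761698887341703168)*N^43
      + (-864619226593461895907103339580489728)*N^44
      + (148434333794790575653484344608030720)*N^45
      + (-20646810767845703458787736799936512)*N^46
      + (2235141353660746327544220667084800)*N^47
      + (-176646229604776417460843465146368)*N^48
      + (9064242939512999577914399784960)*N^49
      + (-226606073487824989447859994624)*N^50) * a^2*c^3
  + C ((-1294734836480085000000)*N^3
      + (104823375610108954050000)*N^4
      + (-4110160339131759256455000)*N^5
      + (104062627695669701998540500)*N^6
      + (-1913695695323418848678245350)*N^7
      + (27261940744687060669770856490)*N^8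
      + (-313322222911802387247436207506)*N^9
      + (2987498242360463584102435385614)*N^10
      + (-24117878919509937160760750054526)*N^11
      + (167411052663111157241330106012474)*N^12
      + (-1011294736331243466192270341551038)*N^13
      + (5367911493370904434298876185683302)*N^14
      + (-25233166589511263248200600047459076)*N^15
      + (105726456459730540424884091640213172)*N^16
      + (-396988179238787968043671698309154356)*N^17
      + (1341874202946152578576092468003361044)*N^18
      + (-4098589880999903405679639937916269512)*N^19
      + (11348390786707211226579301642934813324)*N^20
      + (-28561386182267923210537000349775362070)*N^21
      + (65485693927056934496307017264290128535)*N^22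
      + (-137039108228768291724081358504288160661)*N^23
      + (262139058495626648207615699155872002055)*N^24
      + (-458911625839170635860359250765080466305)*N^25
      + (735919461542603489374727555941911448665)*N^26
      + (-1081705698299554261001289118297664512083)*N^27
      + (1457886606875150412204542451523445262585)*N^28
      + (-1801852224112309046537259541834308676089)*N^29
      + (2041866275758432860149118516988304747856)*N^30
      + (-2120629859412457758695124853017259170396)*N^31
      + (2017107890600962937802925610867549189616)*N^32
      + (-1755459885517334140189478077233005097312)*N^33
      + (1395998466201859971522964495701028808448)*N^34
      + (-1012737030859682093143695659053683867264)*N^35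
      + (668875161949503416472195483407541520128)*N^36
      + (-401199044997335821587710916501410014464)*N^37
      + (217897651166600265359319072766214516736)*N^38
      + (-106777002264369068042748926543477541888)*N^39
      + (47009205207344381771326357573164896256)*N^40
      + (-18498690510231969780740447310632632320)*N^41
      + (6466340691628865811292921455712665600)*N^42
      + (-1992731094635746013576962586409959424)*N^43
      + (536350692952168908938661334108078080)*N^44
      + (-124609899971952581283491402565550080)*N^45
      + (24614788022158536357408331215667200)*N^46
      + (-4052177021729011505350130440077312)*N^47
      + (540813556649253533497997855293440)*N^48
      + (-56206542997081552466517908520960)*N^49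
      + (4266874033223300963037609984000)*N^50
      + (-210419925381551775915869995008)*N^51
      + (5058171283210379228746874880)*N^52) * c^4

/-- Second cofactor in the Bezout identity. -/
def A2 (N : ℚ) : R2 :=
  C ((-71022194130545658000000)*N
      + (5269642096504227562260000)*N^2
      + (-188673813140631742285740000)*N^3
      + (4346123185853808788724294600)*N^4
      + (-72453144403149553332151970760)*N^5
      + (932250492201283419000705447312)*N^6
      + (-9641788775261471327213560231836)*N^7
      + (82421615631910910956240255409124)*N^8
      + (-594272940433400881259268306075360)*N^9
      + (3669886256133684702978247059870984)*N^10
      + (-19643990593100963755607863051490028)*N^11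
      + (92012642769774228496348133415777804)*N^12
      + (-380054855208608874123744223662070752)*N^13
      + (1393022854318125230344751614783164000)*N^14
      + (-4554434896973201651775833718124676064)*N^15
      + (13339399791508264880018651994945812496)*N^16
      + (-35123814084092006919931219415839578192)*N^17
      + (83386363257017238819929105102012821728)*N^18
      + (-178913925617063396531092803044120857968)*N^19
      + (347590467237280754324191008635610013080)*N^20
      + (-612345650334390213009859223301804472620)*N^21
      + (979235955083534402318906779752973155300)*N^22
      + (-1422437800462244899357809020242623402276)*N^23
      + (1877457074194045259304808126388543897076)*N^24
      + (-2251528719007174309258641856134292928976)*N^25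
      + (2452327186106475264165900823182680517888)*N^26
      + (-2424001248381772212922812466267361437824)*N^27
      + (2171844074950539257213483555644128003456)*N^28
      + (-1761031870485834218925484483333026485760)*N^29
      + (1289565662175669377106278802580228632576)*N^30
      + (-850586735914996394657549927000549348352)*N^31
      + (503713668906007679925778731646750626816)*N^32
      + (-266753958230780458779795079967147593728)*N^33
      + (125714939882842897090626809923804938240)*N^34
      + (-52411070620458344026694033247222890496)*N^35
      + (19187947538000118734413895830675390464)*N^36
      + (-6112650996269730014728108812308840448)*N^37
      + (1674949643600257947937210791930888192)*N^38
      + (-388917216879218011025264598709174272)*N^39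
      + (75019667351218361690520157075537920)*N^40
      + (-11696048031417803529275010271150080)*N^41
      + (1415869939712700726750599215841280)*N^42
      + (-124849851765341743343463913488384)*N^43
      + (7132743094600603186213278449664)*N^44
      + (-198131752627794532950368845824)*N^45) * a^7
  + C ((69162170059838480625000)*N
      + (-5452614455917019000400000)*N^2
      + (207777607748714374269671250)*N^3
      + (-5101974057459703073867081250)*N^4
      + (90804149844698353388106317900)*N^5
      + (-1249223385966240489740282214340)*N^6
      + (13834408412176920933311236878866)*N^7
      + (-126815303894347341524807980879714)*N^8
      + (981923172112438713921902653415996)*N^9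
      + (-6521472411858520038214048309834276)*N^10
      + (37599098695432674686971651006718068)*N^11
      + (-189985875086039086545869596972627172)*N^12
      + (847894043549108633290199266910458588)*N^13
      + (-3363568181772720103018740571589699588)*N^14
      + (11922965209428891982754699808539085124)*N^15
      + (-37931257769646500222269591496597709956)*N^16
      + (108699203478125683030855468950266069064)*N^17
      + (-281444413098408046402014746961071407956)*N^18
      + (660067872071977926635194646677753695378)*N^19
      + (-1405099058542277946141265122659699598507)*N^20
      + (2719331547038335971595227043156515506253)*N^21
      + (-4790784988027297114333273190561740426629)*N^22
      + (7690287637818808426669215096032447522097)*N^23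
      + (-11254587146008311960752546459790938594988)*N^24
      + (15020680343590580747510401921639915799292)*N^25
      + (-18281362435881710737403605163988023993988)*N^26
      + (20283124787742732566073858207365386213584)*N^27
      + (-20501004125365537750356973038312288623616)*N^28
      + (18857604080405720969215689099878033111424)*N^29
      + (-15763958059732786977985901914997061631104)*N^30
      + (11954487365466764381675237683498920429312)*N^31
      + (-8205501036701943285803475227812320565248)*N^32
      + (5083735619306492558204821962090904968192)*N^33
      + (-2833322934565789468678833630673256727552)*N^34
      + (1414694445640264655781883936276518383616)*N^35
      + (-629681194558365354368251595151705391104)*N^36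
      + (248334553852462453229769259111026917376)*N^37
      + (-86135211996260722948971919954396053504)*N^38
      + (26033991319485057350539371560770732032)*N^39
      + (-6777334883422608717965176123957444608)*N^40
      + (1496981784248773453882195816199749632)*N^41
      + (-275020030544796310262706600910258176)*N^42
      + (40884597333669225984132704976764928)*N^43
      + (-4724466758886538981390025031155712)*N^44
      + (398090285037616787549601983889408)*N^45
      + (-21754494326910165779562482368512)*N^46
      + (578576976779525685626661765120)*N^47) * a^5*c
  + C ((-6808147348491113625000)*N
      + (598334566093823675340000)*N^2
      + (-25325576387362220588021250)*N^3
      + (688647648090437978565952650)*N^4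
      + (-13537663064909081039188376140)*N^5
      + (205266274186135749333101343108)*N^6
      + (-2500904818448211887327315014430)*N^7
      + (25184293801456181907871875387686)*N^8
      + (-213968124499303780607206948372144)*N^9
      + (1557905590543501569988094654959712)*N^10
      + (-9840494793716080949351800646341244)*N^11
      + (54453726708350755791963972707420060)*N^12
      + (-266093713101485361001029360211289520)*N^13
      + (1155827611485479106669392908860205408)*N^14
      + (-4487250515908989677546714875710991832)*N^15
      + (15641869768470493900235177918108191864)*N^16
      + (-49146620408694383467463567197438692840)*N^17
      + (139638537533033954373654813281185548160)*N^18
      + (-359755050562984087910820035451834396178)*N^19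
      + (842335173990347142493213702575132921858)*N^20
      + (-1795774701205255943046295648546471936458)*N^21
      + (3491110412276418971745383040738579975852)*N^22
      + (-6196305175959776251815125395140857531382)*N^23
      + (10049362996198616688374815368415524318018)*N^24
      + (-14901598796495711764066100562461903134866)*N^25
      + (20209003006608765456169141367185131122220)*N^26
      + (-25065835940940552315689347538559574551900)*N^27
      + (28426928804301322285000530961285827639900)*N^28
      + (-29460998192139930124806548189246272868976)*N^29
      + (27878034426379298089122029246678724519168)*N^30
      + (-24058051786782291973687368591299168820096)*N^31
      + (18904938555757134311639916612833528668800)*N^32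
      + (-13501099603605377304160007969810459105280)*N^33
      + (8742026978609718762318987954993668124672)*N^34
      + (-5117441851277863092405352886692047326208)*N^35
      + (2698862098530957464267958127516609084416)*N^36
      + (-1276953532548681503967458956854263377920)*N^37
      + (539310578376231360303911847577902366720)*N^38
      + (-202072315183164648606030475591256113152)*N^39
      + (66668072905594697638102810791783432192)*N^40
      + (-19188200552242086430730236759569334272)*N^41
      + (4761814105253149561467912319074828288)*N^42
      + (-1003668899623111168819824317586997248)*N^43
      + (176123661351546808609254823629422592)*N^44
      + (-25031770465051715951317142590193664)*N^45
      + (2767856842475406143298740202504192)*N^46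
      + (-223354486834948305160014743470080)*N^47
      + (11698538543808965080245772222464)*N^48
      + (-298432105709412374496065617920)*N^49) * a^3*c^2
  + C ((-1294734836480085000000)*N^2
      + (111631522958600067675000)*N^3
      + (-4649304585954397204170000)*N^4
      + (124726217543736322840476750)*N^5
      + (-2424729666056674150329021750)*N^6
      + (36435716894543623718350783530)*N^7
      + (-440809619815776123893409475354)*N^8
      + (4415907523558792124539924453182)*N^9
      + (-37386776752001288678254949889390)*N^10
      + (271701368820912953735946043751934)*N^11
      + (-1715621321740796186490604250887038)*N^12
      + (9504610025725935904287960834756060)*N^13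
      + (-46566595521751646401455847564095868)*N^14
      + (203088445268298861831315743236895004)*N^15
      + (-792751193376351131128412332097043444)*N^16
      + (2782399348784509027966750499344966320)*N^17
      + (-8814756172076595382557358854831361860)*N^18
      + (25288634698562159777465440781973622644)*N^19
      + (-65880672127732878046663957808428575523)*N^20
      + (156209956138700156343633600378224236431)*N^21
      + (-337759917759708762345846340894763924835)*N^22
      + (667013722530121588047661830851945962875)*N^23
      + (-1204560593799411439269026860821343819065)*N^24
      + (1991137463356095182314700450812345925385)*N^25
      + (-3014690722763329878112223843614005077937)*N^26
      + (4182412397783329285246830734083734760593)*N^27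
      + (-5317566815937645600854649563238317993412)*N^28
      + (6195074248881095165530950940627224353220)*N^29
      + (-6610845082771177688394279800921797106220)*N^30
      + (6457337776918820430644972703456365539056)*N^31
      + (-5767905659182827536334844217528230666752)*N^32
      + (4705396164858174418243050702167730591360)*N^33
      + (-3500121030179575863629852306827232660352)*N^34
      + (2369229090717243576596412604560218770176)*N^35
      + (-1455817266649035725833878284148255737856)*N^36
      + (809659248724404075113976166910447846400)*N^37
      + (-406121456508251346707148926026982599680)*N^38
      + (182945975961230325778703227518902685696)*N^39
      + (-73634798566298172335592519359274074112)*N^40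
      + (26317830725261422835055607219703906304)*N^41
      + (-8289785526703681347411643186831687680)*N^42
      + (2279850660344963183217323255904337920)*N^43
      + (-541051747477220325541081051331297280)*N^44
      + (109139615133520433786314686757601280)*N^45
      + (-18342203593718199939962385526161408)*N^46
      + (2498442175192165917125893184028672)*N^47
      + (-264943946894864193470205907697664)*N^48
      + (20516997787701280922818270199808)*N^49
      + (-1031866941774917362664362475520)*N^50
      + (25290856416051896143734374400)*N^51) * a*c^3

/-- `(p2 - lam * c^5)/a^2`. -/
def Hh (N : ℚ) : R2 :=
  C 324 * a^8
  + C (-14580*N^2 + 23328*N - 8811) * a^6 * c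
  + C (68040*N^4 - 217728*N^3 + 246708*N^2 - 116046*N + 18826) * a^4 * c^2
  + C (-68040*N^6 + 326592*N^5 - 616770*N^4 + 580230*N^3 - 282390*N^2 + 65840*N
      - 5519) * a^2 * c^3
  + C (14580*N^8 - 93312*N^7 + 246708*N^6 - 348138*N^5 + 282390*N^4 - 131680*N^3
      + 33114*N^2 - 3786*N + 120) * c^4

lemma key1 (N : ℚ) : A1 N * p1 N + A2 N * p2 N = C (dp N) * a ^ 17 := by
  simp only [A1, A2, p1, p2, dp, a, c, map_add, map_sub, map_mul, map_pow, map_neg,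
    map_ofNat, map_one, map_zero]
  ring

lemma key2 (N : ℚ) : p2 N = C (lam N) * c ^ 5 + a ^ 2 * Hh N := by
  simp only [p2, Hh, lam, a, c, map_add, map_sub, map_mul, map_pow, map_neg,
    map_ofNat, map_one, map_zero]
  ring

lemma dp_pos {N : ℚ} (h : 2 ≤ N) : 0 < dp N := by
  obtain ⟨M, hM, rfl⟩ : ∃ M : ℚ, 0 ≤ M ∧ N = M + 2 := ⟨N - 2, by linarith, by ring⟩
  have h0 : dp (M + 2) =
      (21155002783321413844918080000000000)
      + (899070685024054674993013152000000000)*M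
      + (18607965506608437786433650120000000000)*M^2
      + (249965266404770750815151312197440000000)*M^3
      + (2450691963892630469897898188725458000000)*M^4
      + (18695694890689248892790412529395795000000)*M^5
      + (115542026132734202918428878608763421740000)*M^6
      + (594670589352480431598167955047230447866000)*M^7
      + (2600449702680345937269789513657934618718400)*M^8
      + (9808922933518415075991616828166335238226480)*M^9
      + (32292243553702442250644018210693614607518176)*M^10
      + (93655436981165679407190929589432291994574064)*M^11
      + (241100573638832336225405572588212007639873536)*M^12
      + (554327796880471871253978541178360687566483344)*M^13
      + (1144030937486572404100480464071841960559717632)*M^14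
      + (2128280598835751316686735677782869264206453248)*M^15
      + (3581307825723711543501083370166722747921226752)*M^16
      + (5466527200026956374743405201974576756469808128)*M^17
      + (7586558765485470419988174681280665489356648448)*M^18
      + (9590621712061576765446656898800118391861788672)*M^19
      + (11059670007784352677060737964053308489824124928)*M^20
      + (11646377756411009156111886121156617870841700352)*M^21
      + (11207232853131293603835417869114427221984477184)*M^22
      + (9858771182018201833884286155286324105665970176)*M^23
      + (7928261280845858093574518071561547787225268224)*M^24
      + (5826848000358233400052189576211198448998547456)*M^25
      + (3911221344603532160572369987382232023873617920)*M^26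
      + (2395423534522983293729723590383890571727994880)*M^27
      + (1336739727745128484689074580367941913773342720)*M^28
      + (678468006625283632419806287425111723107942400)*M^29
      + (312501673156990162310035318451433455216492544)*M^30
      + (130259541580918424033551306601286077320790016)*M^31
      + (48969873922181862411957665776190363359248384)*M^32
      + (16535736232467812689223401383237791552372736)*M^33
      + (4990274323775199469909572547120587067097088)*M^34
      + (1337797463074052865408007655365464746360832)*M^35
      + (316213892619708581207593995823736231559168)*M^36
      + (65294304646671710483803091969718670589952)*M^37
      + (11641372325587098392338177188176773251072)*M^38
      + (1765375797347949623723312506913956036608)*M^39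
      + (223209632433290143841700610642953633792)*M^40
      + (22891600450655696413348653981581180928)*M^41
      + (1829211326658332876080473009014439936)*M^42
      + (106831859101444447583908259382165504)*M^43
      + (4055796861563254425323549120004096)*M^44
      + (75107349288208415283769428148224)*M^45 := by
    simp only [dp]; ring
  rw [h0]
  linarith [pow_nonneg hM 2, pow_nonneg hM 3, pow_nonneg hM 4, pow_nonneg hM 5, pow_nonneg hM 6, pow_nonneg hM 7, pow_nonneg hM 8, pow_nonneg hM 9, pow_nonneg hM 10, pow_nonneg hM 11, pow_nonneg hM 12, pow_nonneg hM 13, pow_nonneg hM 14, pow_nonneg hM 15, pow_nonneg hM 16, pow_nonneg hM 17, pow_nonneg hM 18, pow_nonneg hM 19, pow_nonneg hM 20, pow_nonneg hM 21, pow_nonneg hM 22, pow_nonneg hM 23, pow_nonneg hM 24, pow_nonneg hM 25, pow_nonneg hM 26, pow_nonneg hM 27, pow_nonneg hM 28, pow_nonneg hM 29, pow_nonneg hM 30, pow_nonneg hM 31, pow_nonneg hM 32, pow_nonneg hM 33, pow_nonneg hM 34, pow_nonneg hM 35, pow_nonneg hM 36, pow_nonneg hM 37, pow_nonneg hM 38,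 pow_nonneg hM 39, pow_nonneg hM 40, pow_nonneg hM 41, pow_nonneg hM 42, pow_nonneg hM 43, pow_nonneg hM 44, pow_nonneg hM 45]

lemma lam_neg {N : ℚ} (h : 2 ≤ N) : lam N < 0 := by
  obtain ⟨M, hM, rfl⟩ : ∃ M : ℚ, 0 ≤ M ∧ N = M + 2 := ⟨N - 2, by linarith, by ring⟩
  have h0 : lam (M + 2) =
      -((480)
      + (5528)*M
      + (27244)*M^2
      + (76010)*M^3
      + (133495)*M^4
      + (154784)*M^5
      + (120382)*M^6
      + (62190)*M^7
      + (20475)*M^8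
      + (3888)*M^9
      + (324)*M^10) := by
    simp only [lam]; ring
  rw [h0]
  have : (0:ℚ) < (480) + (5528)*M + (27244)*M^2 + (76010)*M^3 + (133495)*M^4 + (154784)*M^5 + (120382)*M^6 + (62190)*M^7 + (20475)*M^8 + (3888)*M^9 + (324)*M^10 := by
    linarith [pow_nonneg hM 2, pow_nonneg hM 3, pow_nonneg hM 4, pow_nonneg hM 5, pow_nonneg hM 6, pow_nonneg hM 7, pow_nonneg hM 8, pow_nonneg hM 9, pow_nonneg hM 10]
  linarith

end Aux

noncomputable section Aux2

open MvPolynomial RingTheory.Sequence Pointwise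

lemma prime_a : Prime (a : R2) := by
  refine (MulEquiv.prime_iff (finSuccEquiv ℚ 1).toMulEquiv).mp ?_
  have h : (finSuccEquiv ℚ 1).toMulEquiv (a : R2) = Polynomial.X := by
    show (finSuccEquiv ℚ 1) (X 0 : R2) = Polynomial.X
    exact finSuccEquiv_X_zero
  rw [h]
  exact Polynomial.prime_X

lemma a_not_dvd_c : ¬ ((a : R2) ∣ c) := by
  rintro ⟨q, hq⟩
  have h := congrArg (eval ![(0:ℚ), 1]) hq
  rw [eval_mul] at h
  simp [a, c] at h

lemma rel_ac : IsRelPrime (a : R2) c := by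
  intro d hda hdc
  obtain ⟨e, he⟩ := hda
  rcases prime_a.irreducible.isUnit_or_isUnit he with h | h
  · exact h
  · exfalso
    apply a_not_dvd_c
    obtain ⟨u, rfl⟩ := h
    exact dvd_trans ⟨(u⁻¹ : R2ˣ), by rw [he, mul_assoc, Units.mul_inv, mul_one]⟩ hdc

lemma ideal_smul_top (I : Ideal R2) : I • (⊤ : Submodule R2 R2) = I := by
  apply le_antisymm
  · exact Submodule.smul_le.mpr fun r hr m _ => by
      simpa [smul_eq_mul] using I.mul_mem_right m hr
  · intro x hx
    simpa [smul_eq_mul] using Submodule.smul_mem_smul hx (Submodule.mem_top (x := (1 : R2)))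

lemma point_smul_top (r : R2) : r • (⊤ : Submodule R2 R2) = Ideal.span {r} := by
  rw [← Submodule.ideal_span_singleton_smul, ideal_smul_top]

lemma p1_ne {N : ℚ} (h : 2 ≤ N) : p1 N ≠ 0 := by
  intro hz
  have h1 := congrArg (eval ![(1:ℚ), 0]) hz
  simp [p1, a, c] at h1
  linarith

lemma relprime {N : ℚ} (h : 2 ≤ N) : IsRelPrime (p1 N) (p2 N) := by
  intro d hd1 hd2
  have hdpne : dp N ≠ 0 := ne_of_gt (dp_pos h)
  have hlamne : lam N ≠ 0 := ne_of_lt (lam_neg h)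
  have hda : d ∣ (a : R2) ^ 17 := by
    have hdiv : d ∣ C (dp N) * a ^ 17 := by
      rw [← key1 N]; exact dvd_add (hd1.mul_left _) (hd2.mul_left _)
    have hrw : (a : R2) ^ 17 = C (dp N)⁻¹ * (C (dp N) * a ^ 17) := by
      rw [← mul_assoc, ← C_mul, inv_mul_cancel₀ hdpne, C_1, one_mul]
    rw [hrw]; exact hdiv.mul_left _
  have hdc : d ∣ (c : R2) ^ 45 := by
    obtain ⟨S, hS⟩ := sub_dvd_pow_sub_pow (C (lam N) * c ^ 5) (-(a ^ 2 * Hh N)) 9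
    have hsub : C (lam N) * c ^ 5 - -(a ^ 2 * Hh N) = p2 N := by rw [key2]; ring
    rw [hsub] at hS
    have h17 : (a : R2) ^ 17 ∣ (-(a ^ 2 * Hh N)) ^ 9 := ⟨-(a * Hh N ^ 9), by ring⟩
    have hdd : d ∣ (C (lam N) * c ^ 5) ^ 9 := by
      have hexp : (C (lam N) * c ^ 5) ^ 9 = p2 N * S + (-(a ^ 2 * Hh N)) ^ 9 := by
        rw [← hS]; ring
      rw [hexp]; exact dvd_add (hd2.mul_right _) (hda.trans h17)
    have hrw : (c : R2) ^ 45 = C ((lam N) ^ 9)⁻¹ * (C (lam N) * c ^ 5) ^ 9 := by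
      rw [mul_pow, ← C_pow, ← mul_assoc, ← C_mul,
        inv_mul_cancel₀ (pow_ne_zero _ hlamne), C_1, one_mul, ← pow_mul]
    rw [hrw]; exact hdd.mul_left _
  exact rel_ac.pow hda hdc

lemma mem_pow_a {N : ℚ} (h : 2 ≤ N) :
    (a : R2) ^ 17 ∈ Ideal.span {p1 N, p2 N} := by
  have h1 : p1 N ∈ Ideal.span {p1 N, p2 N} := Ideal.subset_span (by simp)
  have h2 : p2 N ∈ Ideal.span {p1 N, p2 N} := Ideal.subset_span (by simp)
  have hmem : C (dp N) * a ^ 17 ∈ Ideal.span {p1 N, p2 N} := by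
    rw [← key1]
    exact add_mem (Ideal.mul_mem_left _ _ h1) (Ideal.mul_mem_left _ _ h2)
  have hrw : (a : R2) ^ 17 = C (dp N)⁻¹ * (C (dp N) * a ^ 17) := by
    rw [← mul_assoc, ← C_mul, inv_mul_cancel₀ (ne_of_gt (dp_pos h)), C_1, one_mul]
  rw [hrw]; exact Ideal.mul_mem_left _ _ hmem

lemma mem_pow_c {N : ℚ} (h : 2 ≤ N) :
    (c : R2) ^ 45 ∈ Ideal.span {p1 N, p2 N} := by
  have h2 : p2 N ∈ Ideal.span {p1 N, p2 N} := Ideal.subset_span (by simp)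
  obtain ⟨S, hS⟩ := sub_dvd_pow_sub_pow (C (lam N) * c ^ 5) (-(a ^ 2 * Hh N)) 9
  have hsub : C (lam N) * c ^ 5 - -(a ^ 2 * Hh N) = p2 N := by rw [key2]; ring
  rw [hsub] at hS
  have hdd : (C (lam N) * c ^ 5) ^ 9 ∈ Ideal.span {p1 N, p2 N} := by
    have hexp : (C (lam N) * c ^ 5) ^ 9
        = p2 N * S + a ^ 17 * (-(a * Hh N ^ 9)) := by
      rw [← hS]; ring
    rw [hexp]
    exact add_mem (Ideal.mul_mem_right _ _ h2) (Ideal.mul_mem_right _ _ (mem_pow_a h))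
  have hrw : (c : R2) ^ 45 = C ((lam N) ^ 9)⁻¹ * (C (lam N) * c ^ 5) ^ 9 := by
    rw [mul_pow, ← C_pow, ← mul_assoc, ← C_mul,
      inv_mul_cancel₀ (pow_ne_zero _ (ne_of_lt (lam_neg h))), C_1, one_mul, ← pow_mul]
  rw [hrw]; exact Ideal.mul_mem_left _ _ hdd

lemma findim (I : Ideal R2) (ha : (a : R2) ^ 17 ∈ I) (hc : (c : R2) ^ 45 ∈ I) :
    FiniteDimensional ℚ (R2 ⧸ I) := by
  classical
  refine ⟨⟨(Finset.range 17 ×ˢ Finset.range 45).image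
      (fun p => Ideal.Quotient.mk I (a ^ p.1 * c ^ p.2)), ?_⟩⟩
  rw [eq_top_iff]
  rintro x -
  obtain ⟨f, rfl⟩ := Ideal.Quotient.mk_surjective x
  rw [← support_sum_monomial_coeff f, map_sum]
  apply Submodule.sum_mem
  intro s _
  have hmono : (monomial s) (coeff s f) = C (coeff s f) * (a ^ s 0 * c ^ s 1) := by
    rw [monomial_eq]
    congr 1
    rw [Finsupp.prod_fintype _ _ (fun i => pow_zero _), Fin.prod_univ_two]
    rfl
  by_cases h0 : 17 ≤ s 0
  · have hI : (monomial s) (coeff s f) ∈ I := by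
      obtain ⟨k, hk⟩ : ∃ k, s 0 = k + 17 := ⟨s 0 - 17, by omega⟩
      have heq : (monomial s) (coeff s f)
          = (C (coeff s f) * a ^ k * c ^ s 1) * a ^ 17 := by
        rw [hmono, hk, pow_add]; ring
      rw [heq]; exact Ideal.mul_mem_left _ _ ha
    rw [Ideal.Quotient.eq_zero_iff_mem.mpr hI]
    exact Submodule.zero_mem _
  by_cases h1 : 45 ≤ s 1
  · have hI : (monomial s) (coeff s f) ∈ I := by
      obtain ⟨k, hk⟩ : ∃ k, s 1 = k + 45 := ⟨s 1 - 45, by omega⟩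
      have heq : (monomial s) (coeff s f)
          = (C (coeff s f) * a ^ s 0 * c ^ k) * c ^ 45 := by
        rw [hmono, hk, pow_add]; ring
      rw [heq]; exact Ideal.mul_mem_left _ _ hc
    rw [Ideal.Quotient.eq_zero_iff_mem.mpr hI]
    exact Submodule.zero_mem _
  · push_neg at h0 h1
    have hsm : Ideal.Quotient.mk I ((monomial s) (coeff s f))
        = (coeff s f) • Ideal.Quotient.mk I (a ^ s 0 * c ^ s 1) := by
      rw [hmono, ← smul_eq_C_mul, ← Ideal.Quotient.mkₐ_eq_mk ℚ, map_smul]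
    rw [hsm]
    refine Submodule.smul_mem _ _ (Submodule.subset_span ?_)
    refine Finset.mem_coe.mpr (Finset.mem_image.mpr ⟨(s 0, s 1), ?_, rfl⟩)
    exact Finset.mem_product.mpr ⟨Finset.mem_range.mpr h0, Finset.mem_range.mpr h1⟩

lemma span_pair_ne_top (N : ℚ) : Ideal.span {p1 N, p2 N} ≠ ⊤ := by
  intro htop
  have h1 : (1 : R2) ∈ Ideal.span {p1 N, p2 N} := htop ▸ Submodule.mem_top
  obtain ⟨u, v, huv⟩ := Ideal.mem_span_pair.mp h1
  have h0 := congrArg constantCoeff huv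
  simp [p1, p2, a, c] at h0

end Aux2


open Pointwise

/-- For every `N ≥ 2`, the polynomials `p₁(N), p₂(N)` form a regular sequence in
`ℚ[a,c]`; equivalently, the quotient `ℚ[a,c]/(p₁(N), p₂(N))` is a finite-dimensional
`ℚ`-vector space. -/
theorem stmt_9 (N : ℕ) (hN : 2 ≤ N) :
    RingTheory.Sequence.IsRegular (MvPolynomial (Fin 2) ℚ) [p1 (N : ℚ), p2 (N : ℚ)] ∧
    FiniteDimensional ℚ
      (MvPolynomial (Fin 2) ℚ ⧸ Ideal.span {p1 (N : ℚ), p2 (N : ℚ)}) := by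
  have hN2 : (2 : ℚ) ≤ (N : ℚ) := by exact_mod_cast hN
  constructor
  · rw [RingTheory.Sequence.isRegular_iff]
    constructor
    · rw [RingTheory.Sequence.isWeaklyRegular_cons_iff,
        RingTheory.Sequence.isWeaklyRegular_singleton_iff]
      constructor
      · intro x y hxy
        simp only [smul_eq_mul] at hxy
        exact mul_left_cancel₀ (p1_ne hN2) hxy
      · intro x y hxy
        obtain ⟨f, rfl⟩ := Submodule.Quotient.mk_surjective _ x
        obtain ⟨g, rfl⟩ := Submodule.Quotient.mk_surjective _ y
        dsimp only at hxy
        rw [← Submodule.Quotient.mk_smul, ← Submodule.Quotient.mk_smul,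
          Submodule.Quotient.eq, point_smul_top, Ideal.mem_span_singleton] at hxy
        have hdvd : p1 (N : ℚ) ∣ p2 (N : ℚ) * (f - g) := by
          have : p2 (N : ℚ) • f - p2 (N : ℚ) • g = p2 (N : ℚ) * (f - g) := by
            simp only [smul_eq_mul]; ring
          rwa [this] at hxy
        have hfg : p1 (N : ℚ) ∣ f - g := (relprime hN2).dvd_of_dvd_mul_left hdvd
        rw [Submodule.Quotient.eq, point_smul_top, Ideal.mem_span_singleton]
        exact hfg
    · have hofl : Ideal.ofList [p1 (N : ℚ), p2 (N : ℚ)]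
          = Ideal.span {p1 (N : ℚ), p2 (N : ℚ)} := by
        show Ideal.span _ = Ideal.span _
        congr 1
        ext x
        simp
      rw [ideal_smul_top, hofl]
      exact fun h => span_pair_ne_top (N : ℚ) h.symm
  · exact findim _ (mem_pow_a hN2) (mem_pow_c hN2)
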